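/- arXiv:1402.2806 — 3 statements merged into one kernel-verified Lean document; each statement's English description precedes it below -/
import Mathlib

section
/- Let H be a graph on 8 vertices with no independent set of size 3 and no K_4 subgraph. If (A, B) is a separation of H of order 1 (i.e., V(H) = A ∪ B, no edges between A \ B and B \ A, and |A ∩ B| = 1, with A \ B and B \ A nonempty), then a contradiction follows; in particular H has no cutvertex. -/
/-- A graph on 8 vertices with no independent set of size 3 and no `K₄`
subgraph admits no separation of order 1; in particular it has no cutvertex. -/
theorem stmt_6 (H : SimpleGraph (Fin 8))
    (hind : Hᶜ.CliqueFree 3) (hK4 : H.CliqueFree 4)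
    (A B : Finset (Fin 8))
    (hUnion : A ∪ B = Finset.univ)
    (hA : (A \ B).Nonempty) (hB : (B \ A).Nonempty)
    (hsep : ∀ a ∈ A \ B, ∀ b ∈ B \ A, ¬ H.Adj a b)
    (horder : (A ∩ B).card = 1) :
    False := by
  obtain ⟨a0, ha0⟩ := hA
  obtain ⟨b0, hb0⟩ := hB
  -- A \ B is a clique
  have hAcl : H.IsClique (A \ B : Finset (Fin 8)) := by
    intro x hx y hy hxy
    by_contra hadj
    have hxb : x ≠ b0 := by
      intro h; subst h
      exact (Finset.mem_sdiff.mp hx).2 (Finset.mem_sdiff.mp hb0).1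
    have hyb : y ≠ b0 := by
      intro h; subst h
      exact (Finset.mem_sdiff.mp hy).2 (Finset.mem_sdiff.mp hb0).1
    apply hind {x, y, b0}
    constructor
    · intro u hu v hv huv
      simp only [Finset.coe_insert, Set.mem_insert_iff, Finset.coe_singleton,
        Set.mem_singleton_iff] at hu hv
      rcases hu with rfl | rfl | rfl <;> rcases hv with rfl | rfl | rfl <;>
        first
        | exact absurd rfl huv
        | exact ⟨huv, hadj⟩
        | exact ⟨huv, fun h => hadj h.symm⟩
        | exact ⟨huv, hsep _ hx _ hb0⟩
        | exact ⟨huv, hsep _ hy _ hb0⟩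
        | exact ⟨huv, fun h => hsep _ hx _ hb0 h.symm⟩
        | exact ⟨huv, fun h => hsep _ hy _ hb0 h.symm⟩
    · rw [Finset.card_insert_of_notMem (by simp [hxy, hxb]),
        Finset.card_insert_of_notMem (by simp [hyb])]
      simp
  have hBcl : H.IsClique (B \ A : Finset (Fin 8)) := by
    intro x hx y hy hxy
    by_contra hadj
    have hxb : a0 ≠ x := by
      intro h; subst h
      exact (Finset.mem_sdiff.mp hx).2 (Finset.mem_sdiff.mp ha0).1
    have hyb : a0 ≠ y := by
      intro h; subst h
      exact (Finset.mem_sdiff.mp hy).2 (Finset.mem_sdiff.mp ha0).1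
    apply hind {a0, x, y}
    constructor
    · intro u hu v hv huv
      simp only [Finset.coe_insert, Set.mem_insert_iff, Finset.coe_singleton,
        Set.mem_singleton_iff] at hu hv
      rcases hu with rfl | rfl | rfl <;> rcases hv with rfl | rfl | rfl <;>
        first
        | exact absurd rfl huv
        | exact ⟨huv, hadj⟩
        | exact ⟨huv, fun h => hadj h.symm⟩
        | exact ⟨huv, hsep _ ha0 _ hx⟩
        | exact ⟨huv, hsep _ ha0 _ hy⟩
        | exact ⟨huv, fun h => hsep _ ha0 _ hx h.symm⟩
        | exact ⟨huv, fun h => hsep _ ha0 _ hy h.symm⟩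
    · rw [Finset.card_insert_of_notMem (by simp [hxb, hyb]),
        Finset.card_insert_of_notMem (by simp [hxy])]
      simp
  -- cardinalities
  have hAB : (A \ B).card + (B \ A).card = 7 := by
    have h1 : (A \ B).card + (A ∩ B).card = A.card := Finset.card_sdiff_add_card_inter A B
    have h2 : (B \ A).card + (B ∩ A).card = B.card := Finset.card_sdiff_add_card_inter B A
    have h3 : (A ∪ B).card + (A ∩ B).card = A.card + B.card :=
      Finset.card_union_add_card_inter A B
    have h4 : (A ∪ B).card = 8 := by rw [hUnion]; simp
    rw [Finset.inter_comm B A] at h2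
    omega
  -- one of them has size ≥ 4
  have hbig : ∃ s : Finset (Fin 8), H.IsClique (s : Set (Fin 8)) ∧ 4 ≤ s.card := by
    rcases le_or_gt 4 (A \ B).card with h | h
    · exact ⟨A \ B, hAcl, h⟩
    · exact ⟨B \ A, hBcl, by omega⟩
  obtain ⟨s, hs, hcard⟩ := hbig
  obtain ⟨t, hts, htc⟩ := Finset.exists_subset_card_eq hcard
  exact hK4 t ⟨hs.subset (by exact_mod_cast hts), htc⟩
end

section
/- A graph on 8 vertices with no independent set of size 3 and no K_4 subgraph admits no separation of order 2. -/
lemma indep3 {H : SimpleGraph (Fin 8)} (hind : Hᶜ.CliqueFree 3)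
    {a b c : Fin 8} (hab : a ≠ b) (hac : a ≠ c) (hbc : b ≠ c)
    (h1 : ¬ H.Adj a b) (h2 : ¬ H.Adj a c) (h3 : ¬ H.Adj b c) : False := by
  apply hind {a, b, c}
  rw [SimpleGraph.is3Clique_triple_iff]
  exact ⟨⟨hab, h1⟩, ⟨hac, h2⟩, ⟨hbc, h3⟩⟩

lemma k4 {H : SimpleGraph (Fin 8)} (hK4 : H.CliqueFree 4)
    {a b c d : Fin 8} (hab : H.Adj a b) (hac : H.Adj a c) (had : H.Adj a d)
    (hbc : H.Adj b c) (hbd : H.Adj b d) (hcd : H.Adj c d) : False := by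
  apply hK4 {a, b, c, d}
  constructor
  · intro u hu v hv huv
    simp only [Finset.coe_insert, Set.mem_insert_iff, Finset.coe_singleton,
      Set.mem_singleton_iff] at hu hv
    rcases hu with rfl|rfl|rfl|rfl <;> rcases hv with rfl|rfl|rfl|rfl <;>
      first
        | exact absurd rfl huv
        | assumption
        | exact hab.symm
        | exact hac.symm
        | exact had.symm
        | exact hbc.symm
        | exact hbd.symm
        | exact hcd.symm
  · have h1 := hab.ne; have h2 := hac.ne; have h3 := had.ne
    have h4 := hbc.ne; have h5 := hbd.ne; have h6 := hcd.ne
    rw [Finset.card_insert_of_notMem (by simp [h1, h2, h3]),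
      Finset.card_insert_of_notMem (by simp [h4, h5]),
      Finset.card_insert_of_notMem (by simp [h6]), Finset.card_singleton]

/-- A graph on 8 vertices with no independent set of size 3 and no `K₄`
subgraph admits no separation of order 2. -/
theorem stmt_8 (H : SimpleGraph (Fin 8))
    (hind : Hᶜ.CliqueFree 3) (hK4 : H.CliqueFree 4)
    (A B : Finset (Fin 8))
    (hUnion : A ∪ B = Finset.univ)
    (hA : (A \ B).Nonempty) (hB : (B \ A).Nonempty)
    (hsep : ∀ a ∈ A \ B, ∀ b ∈ B \ A, ¬ H.Adj a b)
    (horder : (A ∩ B).card = 2) :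
    False := by
  -- A \ B is a clique
  obtain ⟨b0, hb0⟩ := hB
  obtain ⟨a0, ha0⟩ := hA
  have hdisj : ∀ a ∈ A \ B, ∀ b ∈ B \ A, a ≠ b := by
    intro a ha b hb h; subst h
    exact (Finset.mem_sdiff.mp hb).2 (Finset.mem_sdiff.mp ha).1
  have hAclique : ∀ a ∈ A \ B, ∀ a' ∈ A \ B, a ≠ a' → H.Adj a a' := by
    intro a ha a' ha' hne
    by_contra hadj
    exact indep3 hind hne (hdisj a ha b0 hb0) (hdisj a' ha' b0 hb0)
      hadj (hsep a ha b0 hb0) (hsep a' ha' b0 hb0)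
  have hBclique : ∀ b ∈ B \ A, ∀ b' ∈ B \ A, b ≠ b' → H.Adj b b' := by
    intro b hb b' hb' hne
    by_contra hadj
    exact indep3 hind hne (hdisj a0 ha0 b hb).symm (hdisj a0 ha0 b' hb').symm
      hadj (fun h => hsep a0 ha0 b hb h.symm) (fun h => hsep a0 ha0 b' hb' h.symm)
  -- card bounds
  have hAle : (A \ B).card ≤ 3 := by
    by_contra h
    push_neg at h
    obtain ⟨s, hs, hcard⟩ := Finset.exists_subset_card_eq h
    apply hK4 s
    refine ⟨?_, hcard⟩
    intro u hu v hv huv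
    exact hAclique u (hs hu) v (hs hv) huv
  have hBle : (B \ A).card ≤ 3 := by
    by_contra h
    push_neg at h
    obtain ⟨s, hs, hcard⟩ := Finset.exists_subset_card_eq h
    apply hK4 s
    refine ⟨?_, hcard⟩
    intro u hu v hv huv
    exact hBclique u (hs hu) v (hs hv) huv
  -- cards sum to 6
  have hsum : (A \ B).card + (B \ A).card + (A ∩ B).card = 8 := by
    have h1 : (A \ B) ∪ (B \ A) ∪ (A ∩ B) = A ∪ B := by
      ext x; simp [Finset.mem_sdiff, Finset.mem_union, Finset.mem_inter]; tauto
    have h2 : Disjoint ((A \ B) ∪ (B \ A)) (A ∩ B) := by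
      rw [Finset.disjoint_left]
      intro x hx hx'
      simp [Finset.mem_inter] at hx'
      simp [Finset.mem_union, Finset.mem_sdiff] at hx
      tauto
    have h3 : Disjoint (A \ B) (B \ A) := by
      rw [Finset.disjoint_left]
      intro x hx hx'
      simp [Finset.mem_sdiff] at hx hx'
      tauto
    rw [← Finset.card_union_of_disjoint h3, ← Finset.card_union_of_disjoint h2, h1,
      hUnion, Finset.card_univ, Fintype.card_fin]
  have hA3 : (A \ B).card = 3 := by omega
  have hB3 : (B \ A).card = 3 := by omega
  -- pick x in A ∩ B
  have hABne : (A ∩ B).Nonempty := Finset.card_pos.mp (by omega)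
  obtain ⟨x, hx⟩ := hABne
  have hxA : x ∈ A := (Finset.mem_inter.mp hx).1
  have hxB : x ∈ B := (Finset.mem_inter.mp hx).2
  obtain ⟨a1, a2, a3, ha12, ha13, ha23, hAeq⟩ := Finset.card_eq_three.mp hA3
  obtain ⟨b1, b2, b3, hb12, hb13, hb23, hBeq⟩ := Finset.card_eq_three.mp hB3
  have ma : ∀ y ∈ ({a1,a2,a3} : Finset (Fin 8)), y ∈ A \ B := by rw [← hAeq]; intro y hy; exact hy
  have mb : ∀ y ∈ ({b1,b2,b3} : Finset (Fin 8)), y ∈ B \ A := by rw [← hBeq]; intro y hy; exact hy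
  have hxa : ∀ a ∈ A \ B, x ≠ a := by
    intro a ha h; subst h; exact (Finset.mem_sdiff.mp ha).2 hxB
  have hxb : ∀ b ∈ B \ A, x ≠ b := by
    intro b hb h; subst h; exact (Finset.mem_sdiff.mp hb).2 hxA
  by_cases hallA : ∀ a ∈ A \ B, H.Adj x a
  · exact k4 hK4 (hallA a1 (ma a1 (by simp))) (hallA a2 (ma a2 (by simp)))
      (hallA a3 (ma a3 (by simp)))
      (hAclique a1 (ma a1 (by simp)) a2 (ma a2 (by simp)) ha12)
      (hAclique a1 (ma a1 (by simp)) a3 (ma a3 (by simp)) ha13)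
      (hAclique a2 (ma a2 (by simp)) a3 (ma a3 (by simp)) ha23)
  by_cases hallB : ∀ b ∈ B \ A, H.Adj x b
  · exact k4 hK4 (hallB b1 (mb b1 (by simp))) (hallB b2 (mb b2 (by simp)))
      (hallB b3 (mb b3 (by simp)))
      (hBclique b1 (mb b1 (by simp)) b2 (mb b2 (by simp)) hb12)
      (hBclique b1 (mb b1 (by simp)) b3 (mb b3 (by simp)) hb13)
      (hBclique b2 (mb b2 (by simp)) b3 (mb b3 (by simp)) hb23)
  push_neg at hallA hallB
  obtain ⟨a, ha, hna⟩ := hallA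
  obtain ⟨b, hb, hnb⟩ := hallB
  exact indep3 hind (hxa a ha) (hxb b hb) (hdisj a ha b hb) hna hnb (hsep a ha b hb)
end

section
/- If a 7-connected graph G contains K_6 minus an edge (K_6^-) as a subgraph and has at least one vertex outside this subgraph, then G contains a K_7^- minor (K_7 minus one edge). -/
/-- `H` is a minor of `G`: there is a family of pairwise disjoint nonempty
connected branch sets in `G`, one for each vertex of `H`, such that every edge
of `H` is realized by an edge of `G` between the corresponding branch sets. -/
def HasMinor {V W : Type*} (G : SimpleGraph V) (H : SimpleGraph W) : Prop :=
  ∃ f : W → Set V,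
    (∀ w, (G.induce (f w)).Connected) ∧
    (Pairwise (Function.onFun Disjoint f)) ∧
    (∀ ⦃w₁ w₂⦄, H.Adj w₁ w₂ → ∃ v₁ ∈ f w₁, ∃ v₂ ∈ f w₂, G.Adj v₁ v₂)

/-- `K₆` minus one edge. -/
def K6minus : SimpleGraph (Fin 6) :=
  (⊤ : SimpleGraph (Fin 6)).deleteEdges {s(0, 1)}

/-- `K₇` minus one edge. -/
def K7minus : SimpleGraph (Fin 7) :=
  (⊤ : SimpleGraph (Fin 7)).deleteEdges {s(0, 1)}

/-- If a 7-connected graph `G` (more than 7 vertices, connected after deleting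
any 6 vertices) contains `K₆⁻` as a subgraph together with a vertex outside
this subgraph, then `G` has a `K₇⁻` minor. -/
theorem stmt_18 {V : Type*} [Fintype V] (G : SimpleGraph V)
    (hcard : 7 < Fintype.card V)
    (hconn : ∀ s : Set V, s.ncard ≤ 6 → (G.induce sᶜ).Connected)
    (f : Fin 6 ↪ V)
    (hsub : ∀ i j : Fin 6, K6minus.Adj i j → G.Adj (f i) (f j))
    (x : V) (hx : ∀ i : Fin 6, x ≠ f i) :
    HasMinor G K7minus := by
  classical
  -- every f i has a neighbor outside the range of f
  have key : ∀ i : Fin 6, ∃ v, v ∉ Set.range f ∧ G.Adj (f i) v := by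
    intro i
    set s : Set V := f '' {j | j ≠ i} with hs
    have hsc : s.ncard ≤ 6 := by
      have h1 : s.ncard ≤ ({j | j ≠ i} : Set (Fin 6)).ncard :=
        Set.ncard_image_le (Set.toFinite _)
      have h2 : ({j | j ≠ i} : Set (Fin 6)).ncard ≤ (Set.univ : Set (Fin 6)).ncard :=
        Set.ncard_le_ncard (Set.subset_univ _) (Set.toFinite _)
      have h3 : (Set.univ : Set (Fin 6)).ncard = 6 := by
        simp [Set.ncard_univ]
      omega
    have hc := hconn s hsc
    have hfi : f i ∈ sᶜ := by
      simp only [Set.mem_compl_iff, hs, Set.mem_image, Set.mem_setOf_eq]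
      rintro ⟨j, hj, hje⟩
      exact hj (f.injective hje)
    have hxs : x ∈ sᶜ := by
      simp only [Set.mem_compl_iff, hs, Set.mem_image, Set.mem_setOf_eq]
      rintro ⟨j, hj, hje⟩
      exact hx j hje.symm
    obtain ⟨p⟩ := hc.preconnected ⟨f i, hfi⟩ ⟨x, hxs⟩
    have hne : (⟨f i, hfi⟩ : (sᶜ : Set V)) ≠ ⟨x, hxs⟩ := by
      intro h
      exact hx i (congrArg Subtype.val h).symm
    have hnil : ¬ p.Nil := SimpleGraph.Walk.not_nil_of_ne hne
    have hadj := p.adj_snd hnil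
    set w : (sᶜ : Set V) := p.getVert 1 with hw
    have hGadj : G.Adj (f i) (w : V) := hadj
    refine ⟨(w : V), ?_, hGadj⟩
    rintro ⟨j, hj⟩
    by_cases hji : j = i
    · subst hji
      rw [← hj] at hGadj
      exact G.irrefl hGadj
    · exact w.2 ⟨j, hji, hj⟩
  -- branch sets
  set B : Fin 7 → Set V :=
    fun w => if h : (w : ℕ) < 6 then {f ⟨w, h⟩} else (Set.range f)ᶜ with hB
  have hBpos : ∀ (w : Fin 7) (h : (w : ℕ) < 6), B w = {f ⟨w, h⟩} := fun w h => dif_pos h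
  have hBneg : ∀ (w : Fin 7), ¬ (w : ℕ) < 6 → B w = (Set.range f)ᶜ := fun w h => dif_neg h
  refine ⟨B, ?_, ?_, ?_⟩
  · intro w
    by_cases h : (w : ℕ) < 6
    · rw [hBpos w h, SimpleGraph.connected_iff]
      constructor
      · intro u v
        have huv : u = v := Subtype.ext (u.2.trans v.2.symm)
        exact huv ▸ SimpleGraph.Reachable.refl _
      · exact ⟨⟨f ⟨w, h⟩, rfl⟩⟩
    · rw [hBneg w h]
      apply hconn
      have himg : (Set.range ⇑f) = ⇑f '' Set.univ := (Set.image_univ).symm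
      rw [himg, Set.ncard_image_of_injective _ f.injective, Set.ncard_univ]
      simp
  · intro w₁ w₂ hne
    have hvne : (w₁ : ℕ) ≠ (w₂ : ℕ) := fun h => hne (Fin.ext h)
    by_cases h1 : (w₁ : ℕ) < 6 <;> by_cases h2 : (w₂ : ℕ) < 6
    · rw [Function.onFun, hBpos w₁ h1, hBpos w₂ h2, Set.disjoint_singleton]
      intro h
      have := f.injective h
      rw [Fin.mk_eq_mk] at this
      exact hvne this
    · rw [Function.onFun, hBpos w₁ h1, hBneg w₂ h2, Set.disjoint_singleton_left]
      simp
    · rw [Function.onFun, hBneg w₁ h1, hBpos w₂ h2, Set.disjoint_singleton_right]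
      simp
    · exact absurd (Fin.ext (by omega : (w₁ : ℕ) = (w₂ : ℕ))) hne
  · intro w₁ w₂ hadj
    rw [K7minus, SimpleGraph.deleteEdges_adj, Set.mem_singleton_iff] at hadj
    have hne : w₁ ≠ w₂ := hadj.1.ne
    have hvne : (w₁ : ℕ) ≠ (w₂ : ℕ) := fun h => hne (Fin.ext h)
    have hs2 : ¬ (((w₁ : ℕ) = 0 ∧ (w₂ : ℕ) = 1) ∨ ((w₁ : ℕ) = 1 ∧ (w₂ : ℕ) = 0)) := by
      intro h
      apply hadj.2
      rw [Sym2.eq_iff]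
      rcases h with ⟨ha, hb⟩ | ⟨ha, hb⟩
      · exact Or.inl ⟨Fin.ext (by simpa using ha), Fin.ext (by simpa using hb)⟩
      · exact Or.inr ⟨Fin.ext (by simpa using ha), Fin.ext (by simpa using hb)⟩
    by_cases h1 : (w₁ : ℕ) < 6 <;> by_cases h2 : (w₂ : ℕ) < 6
    · -- both in the K6⁻
      refine ⟨f ⟨w₁, h1⟩, by rw [hBpos w₁ h1]; rfl, f ⟨w₂, h2⟩, by rw [hBpos w₂ h2]; rfl, ?_⟩
      apply hsub
      rw [K6minus, SimpleGraph.deleteEdges_adj, Set.mem_singleton_iff]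
      constructor
      · simp only [SimpleGraph.top_adj, ne_eq, Fin.mk.injEq]
        exact hvne
      · intro h
        rw [Sym2.eq_iff] at h
        apply hs2
        rcases h with ⟨ha, hb⟩ | ⟨ha, hb⟩
        · exact Or.inl ⟨by simpa using congrArg Fin.val ha, by simpa using congrArg Fin.val hb⟩
        · exact Or.inr ⟨by simpa using congrArg Fin.val ha, by simpa using congrArg Fin.val hb⟩
    · -- w₂ = 6
      obtain ⟨v, hv, hadj'⟩ := key ⟨w₁, h1⟩
      exact ⟨f ⟨w₁, h1⟩, by rw [hBpos w₁ h1]; rfl, v, by rw [hBneg w₂ h2]; exact hv, hadj'⟩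
    · -- w₁ = 6
      obtain ⟨v, hv, hadj'⟩ := key ⟨w₂, h2⟩
      exact ⟨v, by rw [hBneg w₁ h1]; exact hv, f ⟨w₂, h2⟩, by rw [hBpos w₂ h2]; rfl, hadj'.symm⟩
    · exact absurd (Fin.ext (by omega : (w₁ : ℕ) = (w₂ : ℕ))) hne
end
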